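/- Let k be any field and consider the polynomial ring k[x,y,u,v,f,g,p,q] graded so that x, y, u, v have degree 1 and f, g, p, q have degree 2. There do not exist weighted-homogeneous polynomials x_1 of degree 1, q_1 of degree 3, and g_1, g_2, h_1, h_2 of degree 2 in this ring such that x²f + y²g + u²p + v²q = x_1q_1 + g_1h_1 + g_2h_2. -/

import Mathlib

/-- The weights on the polynomial ring `k[x,y,u,v,f,g,p,q]`: the first four variables
`x, y, u, v` have degree 1 and the last four variables `f, g, p, q` have degree 2. -/
def strengthWeight : Fin 8 → ℕ := fun i => if (i : ℕ) < 4 then 1 else 2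

section StrengthAux

open MvPolynomial

noncomputable section

variable {k : Type*} [Field k]


variable {k : Type*} [Field k]

/-- dot product on `Fin 4 → k` -/
def sdot (a b : Fin 4 → k) : k := ∑ j, a j * b j

lemma sdot_single (a : Fin 4 → k) (j : Fin 4) (c : k) : sdot a (Pi.single j c) = a j * c := by
  unfold sdot
  rw [Finset.sum_eq_single j]
  · simp
  · intro b _ hb; simp [Pi.single_apply, hb]
  · simp

lemma sdot_add_right (a b c : Fin 4 → k) : sdot a (b + c) = sdot a b + sdot a c := by
  unfold sdot; rw [← Finset.sum_add_distrib]
  exact Finset.sum_congr rfl (by intros; simp [mul_add])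

lemma sdot_sub_right (a b c : Fin 4 → k) : sdot a (b - c) = sdot a b - sdot a c := by
  unfold sdot; rw [← Finset.sum_sub_distrib]
  exact Finset.sum_congr rfl (by intros; simp [mul_sub])

lemma sdot_smul_right (t : k) (a b : Fin 4 → k) : sdot a (t • b) = t * sdot a b := by
  unfold sdot; rw [Finset.mul_sum]
  exact Finset.sum_congr rfl (by intros; simp; ring)

lemma sdot_add_left (a b c : Fin 4 → k) : sdot (a + b) c = sdot a c + sdot b c := by
  unfold sdot; rw [← Finset.sum_add_distrib]
  exact Finset.sum_congr rfl (by intros; simp [add_mul])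

lemma sdot_smul_left (t : k) (a b : Fin 4 → k) : sdot (t • a) b = t * sdot a b := by
  unfold sdot; rw [Finset.mul_sum]
  exact Finset.sum_congr rfl (by intros; simp; ring)

lemma sdot_zero_left (b : Fin 4 → k) : sdot (0 : Fin 4 → k) b = 0 := by
  unfold sdot; simp

/-- Either there is a vector pairing to zero with `mu` but not with `lam`, or
`lam` is a multiple of `mu`. -/
lemma exists_eval (lam mu : Fin 4 → k) :
    (∃ e, sdot mu e = 0 ∧ sdot lam e ≠ 0) ∨ ∃ t : k, lam = t • mu := by
  by_cases hmu : mu = 0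
  · by_cases hlam : lam = 0
    · exact Or.inr ⟨0, by simp [hlam]⟩
    · obtain ⟨i, hi⟩ := Function.ne_iff.mp hlam
      exact Or.inl ⟨Pi.single i 1, by simp [hmu, sdot_zero_left],
        by rw [sdot_single]; simpa using hi⟩
  · obtain ⟨i, hi⟩ := Function.ne_iff.mp hmu
    simp only [Pi.zero_apply] at hi
    by_cases h : lam = (lam i / mu i) • mu
    · exact Or.inr ⟨_, h⟩
    · obtain ⟨j, hj⟩ := Function.ne_iff.mp h
      simp only [Pi.smul_apply, smul_eq_mul] at hj
      refine Or.inl ⟨(Pi.single j (1:k) : Fin 4 → k) - (mu j / mu i) • (Pi.single i (1:k) : Fin 4 → k), ?_, ?_⟩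
      · rw [sdot_sub_right, sdot_smul_right, sdot_single, sdot_single]
        field_simp
        ring
      · rw [sdot_sub_right, sdot_smul_right, sdot_single, sdot_single]
        intro hc
        apply hj
        field_simp at hc ⊢
        linear_combination hc

section SpanTwo

variable (l1 m1 l2 m2 : Fin 4 → k)

/-- From the vanishing of the quadratic form, the polarized vector identity. -/
lemma key_of_quad (hQ : ∀ c, sdot l1 c * sdot m1 c + sdot l2 c * sdot m2 c = 0) :
    ∀ c, (sdot m1 c) • l1 + (sdot l1 c) • m1 + (sdot m2 c) • l2 + (sdot l2 c) • m2 = 0 := by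
  intro c
  funext i
  have hB := hQ (c + Pi.single i 1)
  have h1 := hQ c
  have h2 := hQ (Pi.single i 1)
  rw [sdot_add_right, sdot_add_right, sdot_add_right, sdot_add_right] at hB
  rw [sdot_single, sdot_single, sdot_single, sdot_single] at hB h2
  simp only [Pi.add_apply, Pi.smul_apply, smul_eq_mul, Pi.zero_apply]
  linear_combination hB - h1 - h2

/-- auxiliary step: if `l1, m1` are multiples of `v`, all four vectors lie in the span of
two vectors. -/
lemma span_two_aux (v : Fin 4 → k)
    (key : ∀ c, (sdot m1 c) • l1 + (sdot l1 c) • m1 + (sdot m2 c) • l2 + (sdot l2 c) • m2 = 0)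
    (h1 : ∃ p : k, l1 = p • v) (h2 : ∃ q : k, m1 = q • v) :
    ∃ w1 w2 : Fin 4 → k, (∃ a b : k, l1 = a • w1 + b • w2) ∧ (∃ a b : k, m1 = a • w1 + b • w2) ∧
      (∃ a b : k, l2 = a • w1 + b • w2) ∧ (∃ a b : k, m2 = a • w1 + b • w2) := by
  obtain ⟨p, hp⟩ := h1
  obtain ⟨q, hq⟩ := h2
  rcases exists_eval l2 m2 with ⟨f, hf0, hf1⟩ | ⟨r, hr⟩
  · -- m2 is a multiple of v
    have hm2 : ∃ s : k, m2 = s • v := by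
      refine ⟨(sdot l2 f)⁻¹ * (-(sdot m1 f * p) - sdot l1 f * q), ?_⟩
      funext i
      have hk := congrFun (key f) i
      rw [hf0] at hk
      simp only [Pi.add_apply, Pi.smul_apply, smul_eq_mul, Pi.zero_apply, zero_mul,
        zero_add, hp, hq] at hk ⊢
      have key2 : m2 i = (sdot l2 f)⁻¹ * (sdot l2 f * m2 i) := by
        rw [← mul_assoc, inv_mul_cancel₀ hf1, one_mul]
      conv_lhs => rw [key2]
      linear_combination (sdot l2 f)⁻¹ * hk
    obtain ⟨s, hm2⟩ := hm2
    rcases exists_eval m2 l2 with ⟨f', hf'0, hf'1⟩ | ⟨r, hr⟩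
    · -- l2 is a multiple of v too
      have hl2 : ∃ s' : k, l2 = s' • v := by
        refine ⟨(sdot m2 f')⁻¹ * (-(sdot m1 f' * p) - sdot l1 f' * q), ?_⟩
        funext i
        have hk := congrFun (key f') i
        rw [hf'0] at hk
        simp only [Pi.add_apply, Pi.smul_apply, smul_eq_mul, Pi.zero_apply, zero_mul,
          add_zero, hp, hq] at hk ⊢
        have key2 : l2 i = (sdot m2 f')⁻¹ * (sdot m2 f' * l2 i) := by
          rw [← mul_assoc, inv_mul_cancel₀ hf'1, one_mul]
        conv_lhs => rw [key2]
        linear_combination (sdot m2 f')⁻¹ * hk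
      obtain ⟨s', hl2⟩ := hl2
      exact ⟨v, v, ⟨p, 0, by simp [hp]⟩, ⟨q, 0, by simp [hq]⟩,
        ⟨s', 0, by simp [hl2]⟩, ⟨s, 0, by simp [hm2]⟩⟩
    · exact ⟨v, l2, ⟨p, 0, by simp [hp]⟩, ⟨q, 0, by simp [hq]⟩,
        ⟨0, 1, by simp⟩, ⟨0, r, by simp [hr]⟩⟩
  · exact ⟨v, m2, ⟨p, 0, by simp [hp]⟩, ⟨q, 0, by simp [hq]⟩,
      ⟨0, r, by simp [hr]⟩, ⟨0, 1, by simp⟩⟩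

/-- The main span lemma: if the quadratic identity holds, all four vectors lie in the span
of two vectors. -/
lemma span_two (hQ : ∀ c, sdot l1 c * sdot m1 c + sdot l2 c * sdot m2 c = 0) :
    ∃ w1 w2 : Fin 4 → k, (∃ a b : k, l1 = a • w1 + b • w2) ∧ (∃ a b : k, m1 = a • w1 + b • w2) ∧
      (∃ a b : k, l2 = a • w1 + b • w2) ∧ (∃ a b : k, m2 = a • w1 + b • w2) := by
  have key := key_of_quad l1 m1 l2 m2 hQ
  rcases exists_eval l1 m1 with ⟨e, he0, he1⟩ | ⟨t, ht⟩
  · have hm1 : m1 = (-(sdot l1 e)⁻¹ * sdot m2 e) • l2 + (-(sdot l1 e)⁻¹ * sdot l2 e) • m2 := by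
      funext i
      have hk := congrFun (key e) i
      rw [he0] at hk
      simp only [Pi.add_apply, Pi.smul_apply, smul_eq_mul, Pi.zero_apply, zero_mul,
        zero_add] at hk ⊢
      have key2 : m1 i = (sdot l1 e)⁻¹ * (sdot l1 e * m1 i) := by
        rw [← mul_assoc, inv_mul_cancel₀ he1, one_mul]
      conv_lhs => rw [key2]
      linear_combination (sdot l1 e)⁻¹ * hk
    rcases exists_eval m1 l1 with ⟨e', he'0, he'1⟩ | ⟨t, ht⟩
    · have hl1 : l1 = (-(sdot m1 e')⁻¹ * sdot m2 e') • l2 +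
          (-(sdot m1 e')⁻¹ * sdot l2 e') • m2 := by
        funext i
        have hk := congrFun (key e') i
        rw [he'0] at hk
        simp only [Pi.add_apply, Pi.smul_apply, smul_eq_mul, Pi.zero_apply, zero_mul,
          add_zero, zero_add] at hk ⊢
        have key2 : l1 i = (sdot m1 e')⁻¹ * (sdot m1 e' * l1 i) := by
          rw [← mul_assoc, inv_mul_cancel₀ he'1, one_mul]
        conv_lhs => rw [key2]
        linear_combination (sdot m1 e')⁻¹ * hk
      exact ⟨l2, m2, ⟨_, _, hl1⟩, ⟨_, _, hm1⟩, ⟨1, 0, by simp⟩, ⟨0, 1, by simp⟩⟩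
    · exact span_two_aux l1 m1 l2 m2 l1 key ⟨1, by simp⟩ ⟨t, ht⟩
  · exact span_two_aux l1 m1 l2 m2 m1 key ⟨t, ht⟩ ⟨1, by simp⟩

end SpanTwo




/-- The linear map given by dotting with `w`. -/
def dotL (w : Fin 4 → k) : (Fin 4 → k) →ₗ[k] k := ∑ j, w j • LinearMap.proj j

lemma dotL_apply (w c : Fin 4 → k) : dotL w c = sdot w c := by
  simp [dotL, sdot, LinearMap.sum_apply]

/-- There is a subspace of dimension at least 2 orthogonal to two given vectors. -/
lemma exists_ker_subspace (w1 w2 : Fin 4 → k) :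
    ∃ K : Submodule k (Fin 4 → k), 2 ≤ Module.finrank k K ∧
      ∀ c ∈ K, sdot w1 c = 0 ∧ sdot w2 c = 0 := by
  set M : (Fin 4 → k) →ₗ[k] (Fin 2 → k) :=
    LinearMap.pi (fun i => if i = 0 then dotL w1 else dotL w2) with hM
  refine ⟨LinearMap.ker M, ?_, ?_⟩
  · have h1 := LinearMap.finrank_range_add_finrank_ker M
    have h2 : Module.finrank k (LinearMap.range M) ≤ 2 := by
      have := Submodule.finrank_le (LinearMap.range M)
      simpa [Module.finrank_pi] using this
    have h3 : Module.finrank k (Fin 4 → k) = 4 := by simp [Module.finrank_pi]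
    omega
  · intro c hc
    rw [LinearMap.mem_ker] at hc
    constructor
    · have := congrFun hc 0
      simpa [hM, LinearMap.pi_apply, dotL_apply] using this
    · have := congrFun hc 1
      simpa [hM, LinearMap.pi_apply, dotL_apply] using this

/-- A subspace all of whose elements are multiples of a fixed vector has rank at most 1. -/
lemma finrank_le_one_of (K : Submodule k (Fin 4 → k)) (e : Fin 4 → k)
    (hK : ∀ c ∈ K, ∃ t : k, c = t • e) : Module.finrank k K ≤ 1 := by
  have hle : K ≤ Submodule.span k {e} := by
    intro c hc
    obtain ⟨t, ht⟩ := hK c hc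
    exact Submodule.mem_span_singleton.mpr ⟨t, ht.symm⟩
  calc Module.finrank k K ≤ Module.finrank k (Submodule.span k {e}) :=
        Submodule.finrank_mono hle
    _ ≤ 1 := by
        by_cases he : e = (0 : Fin 4 → k)
        · rw [he, Submodule.span_zero_singleton]
          rw [finrank_bot]
          omega
        · rw [finrank_span_singleton he]






/-- The algebra map tracking the degree in the last four variables. -/
def psi : MvPolynomial (Fin 8) k →ₐ[k] Polynomial (MvPolynomial (Fin 8) k) :=
  aeval (fun i => if (i : ℕ) < 4 then Polynomial.C (X i) else Polynomial.X * Polynomial.C (X i))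

/-- The degree in the last four variables. -/
def zdeg (m : Fin 8 →₀ ℕ) : ℕ := m 4 + m 5 + m 6 + m 7

lemma finv0 : (((0 : Fin 8)) : ℕ) = 0 := rfl
lemma finv1 : (((1 : Fin 8)) : ℕ) = 1 := rfl
lemma finv2 : (((2 : Fin 8)) : ℕ) = 2 := rfl
lemma finv3 : (((3 : Fin 8)) : ℕ) = 3 := rfl
lemma finv4 : (((4 : Fin 8)) : ℕ) = 4 := rfl
lemma finv5 : (((5 : Fin 8)) : ℕ) = 5 := rfl
lemma finv6 : (((6 : Fin 8)) : ℕ) = 6 := rfl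
lemma finv7 : (((7 : Fin 8)) : ℕ) = 7 := rfl

lemma weight_eq (m : Fin 8 →₀ ℕ) :
    Finsupp.weight strengthWeight m = m 0 + m 1 + m 2 + m 3 + 2 * zdeg m := by
  rw [Finsupp.weight_apply, Finsupp.sum_fintype _ _ (fun i => by simp), Fin.sum_univ_eight]
  simp only [strengthWeight, smul_eq_mul, zdeg, finv0, finv1, finv2, finv3, finv4, finv5,
    finv6, finv7, Nat.reduceLT, reduceIte]
  ring

lemma psi_monomial (m : Fin 8 →₀ ℕ) (c : k) :
    psi (monomial m c) = Polynomial.monomial (zdeg m) (monomial m c) := by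
  rw [psi, aeval_monomial, Finsupp.prod_pow, Fin.prod_univ_eight]
  rw [← Polynomial.C_mul_X_pow_eq_monomial]
  rw [monomial_eq, Finsupp.prod_pow, Fin.prod_univ_eight]
  have halg : (algebraMap k (Polynomial (MvPolynomial (Fin 8) k))) c
      = Polynomial.C (MvPolynomial.C c) := by
    rw [Polynomial.algebraMap_apply, MvPolynomial.algebraMap_eq]
  rw [halg]
  simp only [finv0, finv1, finv2, finv3, finv4, finv5, finv6, finv7, Nat.reduceLT, reduceIte]
  rw [mul_pow, mul_pow, mul_pow, mul_pow]
  simp only [map_mul, map_pow, zdeg]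
  rw [pow_add, pow_add, pow_add]
  ring

lemma psi_eq_sum (w : MvPolynomial (Fin 8) k) :
    psi w = ∑ m ∈ w.support, Polynomial.monomial (zdeg m) (monomial m (coeff m w)) := by
  conv_lhs => rw [← support_sum_monomial_coeff w]
  rw [map_sum]
  exact Finset.sum_congr rfl fun m _ => psi_monomial m _

lemma psi_degree_le (w : MvPolynomial (Fin 8) k) (d : ℕ)
    (hw : w.IsWeightedHomogeneous strengthWeight d) (hd : d ≤ 3) :
    (psi w).degree ≤ 1 := by
  rw [psi_eq_sum]
  refine le_trans (Polynomial.degree_sum_le _ _) ?_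
  rw [Finset.sup_le_iff]
  intro m hm
  refine le_trans (Polynomial.degree_monomial_le _ _) ?_
  have h1 := hw (mem_support_iff.mp hm)
  rw [weight_eq] at h1
  have h2 : zdeg m ≤ 1 := by omega
  exact_mod_cast Nat.cast_le.mpr h2

lemma eq_single_of (m : Fin 8 →₀ ℕ) (i : Fin 8)
    (h : ∀ j : Fin 8, m j = if j = i then 1 else 0) : m = Finsupp.single i 1 := by
  ext j
  rw [h j, Finsupp.single_apply]
  simp [eq_comm]

lemma monomial_single_smul (i : Fin 8) (c : k) :
    monomial (Finsupp.single i 1) c = c • (X i : MvPolynomial (Fin 8) k) := by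
  rw [smul_eq_C_mul, X, C_mul_monomial, mul_one]

lemma psi_coeff_one_mem (w : MvPolynomial (Fin 8) k)
    (hw : w.IsWeightedHomogeneous strengthWeight 2) :
    (psi w).coeff 1 ∈ Submodule.span k
      (Set.range ![(X 4 : MvPolynomial (Fin 8) k), X 5, X 6, X 7]) := by
  rw [psi_eq_sum, Polynomial.finset_sum_coeff]
  apply Submodule.sum_mem
  intro m hm
  rw [Polynomial.coeff_monomial]
  by_cases hz : zdeg m = 1
  · rw [if_pos hz]
    have h1 := hw (mem_support_iff.mp hm)
    rw [weight_eq, hz] at h1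
    have h0 : m 0 = 0 ∧ m 1 = 0 ∧ m 2 = 0 ∧ m 3 = 0 := by omega
    have h4 : (m 4 = 1 ∧ m 5 = 0 ∧ m 6 = 0 ∧ m 7 = 0) ∨
        (m 5 = 1 ∧ m 4 = 0 ∧ m 6 = 0 ∧ m 7 = 0) ∨
        (m 6 = 1 ∧ m 4 = 0 ∧ m 5 = 0 ∧ m 7 = 0) ∨
        (m 7 = 1 ∧ m 4 = 0 ∧ m 5 = 0 ∧ m 6 = 0) := by
      unfold zdeg at hz; omega
    obtain ⟨q0, q1, q2, q3⟩ := h0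
    rcases h4 with ⟨p1, p2, p3, p4⟩ | ⟨p1, p2, p3, p4⟩ | ⟨p1, p2, p3, p4⟩ | ⟨p1, p2, p3, p4⟩
    · have hm' : m = Finsupp.single (4 : Fin 8) 1 :=
      eq_single_of m 4 (by intro j; fin_cases j <;> simp_all)
      rw [hm', monomial_single_smul]
      exact Submodule.smul_mem _ _ (Submodule.subset_span ⟨0, rfl⟩)
    · have hm' : m = Finsupp.single (5 : Fin 8) 1 :=
      eq_single_of m 5 (by intro j; fin_cases j <;> simp_all)
      rw [hm', monomial_single_smul]
      exact Submodule.smul_mem _ _ (Submodule.subset_span ⟨1, rfl⟩)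
    · have hm' : m = Finsupp.single (6 : Fin 8) 1 :=
      eq_single_of m 6 (by intro j; fin_cases j <;> simp_all)
      rw [hm', monomial_single_smul]
      exact Submodule.smul_mem _ _ (Submodule.subset_span ⟨2, rfl⟩)
    · have hm' : m = Finsupp.single (7 : Fin 8) 1 :=
      eq_single_of m 7 (by intro j; fin_cases j <;> simp_all)
      rw [hm', monomial_single_smul]
      exact Submodule.smul_mem _ _ (Submodule.subset_span ⟨3, rfl⟩)
  · rw [if_neg hz]
    exact Submodule.zero_mem _

lemma deg_one_psi (w : MvPolynomial (Fin 8) k)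
    (hw : w.IsWeightedHomogeneous strengthWeight 1) :
    psi w = Polynomial.C w := by
  rw [psi_eq_sum]
  have : ∀ m ∈ w.support, Polynomial.monomial (zdeg m) (monomial m (coeff m w))
      = Polynomial.C (monomial m (coeff m w)) := by
    intro m hm
    have h1 := hw (mem_support_iff.mp hm)
    rw [weight_eq] at h1
    have h2 : zdeg m = 0 := by omega
    rw [h2, Polynomial.monomial_zero_left]
  rw [Finset.sum_congr rfl this, ← map_sum, support_sum_monomial_coeff]

lemma deg_one_structure (w : MvPolynomial (Fin 8) k)
    (hw : w.IsWeightedHomogeneous strengthWeight 1) :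
    w ∈ Submodule.span k (Set.range ![(X 0 : MvPolynomial (Fin 8) k), X 1, X 2, X 3]) := by
  rw [← support_sum_monomial_coeff w]
  apply Submodule.sum_mem
  intro m hm
  have h1 := hw (mem_support_iff.mp hm)
  rw [weight_eq] at h1
  have h0 : zdeg m = 0 := by omega
  unfold zdeg at h0
  have h4 : (m 0 = 1 ∧ m 1 = 0 ∧ m 2 = 0 ∧ m 3 = 0) ∨
      (m 1 = 1 ∧ m 0 = 0 ∧ m 2 = 0 ∧ m 3 = 0) ∨
      (m 2 = 1 ∧ m 0 = 0 ∧ m 1 = 0 ∧ m 3 = 0) ∨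
      (m 3 = 1 ∧ m 0 = 0 ∧ m 1 = 0 ∧ m 2 = 0) := by omega
  have hz : m 4 = 0 ∧ m 5 = 0 ∧ m 6 = 0 ∧ m 7 = 0 := by omega
  obtain ⟨q4, q5, q6, q7⟩ := hz
  rcases h4 with ⟨p1, p2, p3, p4⟩ | ⟨p1, p2, p3, p4⟩ | ⟨p1, p2, p3, p4⟩ | ⟨p1, p2, p3, p4⟩
  · have hm' : m = Finsupp.single (0 : Fin 8) 1 :=
      eq_single_of m 0 (by intro j; fin_cases j <;> simp_all)
    rw [hm', monomial_single_smul]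
    exact Submodule.smul_mem _ _ (Submodule.subset_span ⟨0, rfl⟩)
  · have hm' : m = Finsupp.single (1 : Fin 8) 1 :=
      eq_single_of m 1 (by intro j; fin_cases j <;> simp_all)
    rw [hm', monomial_single_smul]
    exact Submodule.smul_mem _ _ (Submodule.subset_span ⟨1, rfl⟩)
  · have hm' : m = Finsupp.single (2 : Fin 8) 1 :=
      eq_single_of m 2 (by intro j; fin_cases j <;> simp_all)
    rw [hm', monomial_single_smul]
    exact Submodule.smul_mem _ _ (Submodule.subset_span ⟨2, rfl⟩)
  · have hm' : m = Finsupp.single (3 : Fin 8) 1 :=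
      eq_single_of m 3 (by intro j; fin_cases j <;> simp_all)
    rw [hm', monomial_single_smul]
    exact Submodule.smul_mem _ _ (Submodule.subset_span ⟨3, rfl⟩)



lemma psi_X0 : psi (X 0 : MvPolynomial (Fin 8) k) = Polynomial.C (X 0) := by rw [psi, aeval_X]; rfl
lemma psi_X1 : psi (X 1 : MvPolynomial (Fin 8) k) = Polynomial.C (X 1) := by rw [psi, aeval_X]; rfl
lemma psi_X2 : psi (X 2 : MvPolynomial (Fin 8) k) = Polynomial.C (X 2) := by rw [psi, aeval_X]; rfl
lemma psi_X3 : psi (X 3 : MvPolynomial (Fin 8) k) = Polynomial.C (X 3) := by rw [psi, aeval_X]; rfl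
lemma psi_X4 : psi (X 4 : MvPolynomial (Fin 8) k) = Polynomial.X * Polynomial.C (X 4) := by
  rw [psi, aeval_X]; rfl
lemma psi_X5 : psi (X 5 : MvPolynomial (Fin 8) k) = Polynomial.X * Polynomial.C (X 5) := by
  rw [psi, aeval_X]; rfl
lemma psi_X6 : psi (X 6 : MvPolynomial (Fin 8) k) = Polynomial.X * Polynomial.C (X 6) := by
  rw [psi, aeval_X]; rfl
lemma psi_X7 : psi (X 7 : MvPolynomial (Fin 8) k) = Polynomial.X * Polynomial.C (X 7) := by
  rw [psi, aeval_X]; rfl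

lemma prod_expand (a b c d : MvPolynomial (Fin 8) k) :
    (Polynomial.C a * Polynomial.X + Polynomial.C b)
      * (Polynomial.C c * Polynomial.X + Polynomial.C d)
    = Polynomial.C (a * c) * Polynomial.X ^ 2 + Polynomial.C (a * d + b * c) * Polynomial.X
      + Polynomial.C (b * d) := by
  rw [Polynomial.C_mul, Polynomial.C_add, Polynomial.C_mul, Polynomial.C_mul, Polynomial.C_mul]
  ring

def theta (c : Fin 4 → k) : MvPolynomial (Fin 8) k →ₐ[k] MvPolynomial (Fin 8) k :=
  aeval ![X 0, X 1, X 2, X 3, C (c 0), C (c 1), C (c 2), C (c 3)]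

lemma theta_X0 (c : Fin 4 → k) : theta c (X 0) = X 0 := by rw [theta, aeval_X]; rfl
lemma theta_X1 (c : Fin 4 → k) : theta c (X 1) = X 1 := by rw [theta, aeval_X]; rfl
lemma theta_X2 (c : Fin 4 → k) : theta c (X 2) = X 2 := by rw [theta, aeval_X]; rfl
lemma theta_X3 (c : Fin 4 → k) : theta c (X 3) = X 3 := by rw [theta, aeval_X]; rfl
lemma theta_X4 (c : Fin 4 → k) : theta c (X 4) = C (c 0) := by rw [theta, aeval_X]; rfl
lemma theta_X5 (c : Fin 4 → k) : theta c (X 5) = C (c 1) := by rw [theta, aeval_X]; rfl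
lemma theta_X6 (c : Fin 4 → k) : theta c (X 6) = C (c 2) := by rw [theta, aeval_X]; rfl
lemma theta_X7 (c : Fin 4 → k) : theta c (X 7) = C (c 3) := by rw [theta, aeval_X]; rfl
lemma theta_C (c : Fin 4 → k) (r : k) : theta c (C r) = C r := by
  rw [theta, aeval_C, MvPolynomial.algebraMap_eq]

lemma theta_lin (c lam : Fin 4 → k) :
    theta c (lam 0 • X 4 + lam 1 • X 5 + lam 2 • X 6 + lam 3 • X 7) = C (sdot lam c) := by
  rw [map_add, map_add, map_add, map_smul, map_smul, map_smul, map_smul,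
    theta_X4, theta_X5, theta_X6, theta_X7, sdot, Fin.sum_univ_four,
    C_add, C_add, C_add, C_mul, C_mul, C_mul, C_mul,
    smul_eq_C_mul, smul_eq_C_mul, smul_eq_C_mul, smul_eq_C_mul]


lemma final_step (a : Fin 4 → k) (K : Submodule k (Fin 4 → k))
    (hrel : ∀ c ∈ K, ∃ m : MvPolynomial (Fin 8) k,
      (X 0 : MvPolynomial (Fin 8) k) ^ 2 * C (c 0) + X 1 ^ 2 * C (c 1)
        + X 2 ^ 2 * C (c 2) + X 3 ^ 2 * C (c 3)
      = (C (a 0) * X 0 + C (a 1) * X 1 + C (a 2) * X 2 + C (a 3) * X 3) * m) :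
    ∃ e : Fin 4 → k, ∀ c ∈ K, ∃ t : k, c = t • e := by
  have hev : ∀ c ∈ K, ∀ p : Fin 4 → k,
      a 0 * p 0 + a 1 * p 1 + a 2 * p 2 + a 3 * p 3 = 0 →
      p 0 ^ 2 * c 0 + p 1 ^ 2 * c 1 + p 2 ^ 2 * c 2 + p 3 ^ 2 * c 3 = 0 := by
    intro c hc p hp
    obtain ⟨m, hm⟩ := hrel c hc
    have h := congrArg (MvPolynomial.eval ![p 0, p 1, p 2, p 3, 0, 0, 0, 0]) hm
    simp only [map_add, map_mul, map_pow, eval_X, eval_C] at h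
    norm_num [Matrix.cons_val_zero, Matrix.cons_val_one, Matrix.head_cons, Matrix.cons_val_two, Matrix.cons_val_three, Matrix.tail_cons] at h
    rw [h, hp, zero_mul]
  by_cases h0 : a 0 ≠ 0
  · refine ⟨![1, -((a 1 / a 0) ^ 2), -((a 2 / a 0) ^ 2), -((a 3 / a 0) ^ 2)],
      fun c hc => ⟨c 0, ?_⟩⟩
    have k1 := hev c hc ![-(a 1 / a 0), 1, 0, 0] (by simp only [Matrix.cons_val]; field_simp; ring)
    have k2 := hev c hc ![-(a 2 / a 0), 0, 1, 0] (by simp only [Matrix.cons_val]; field_simp; ring)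
    have k3 := hev c hc ![-(a 3 / a 0), 0, 0, 1] (by simp only [Matrix.cons_val]; field_simp; ring)
    norm_num [Matrix.cons_val_two, Matrix.cons_val_three, Matrix.tail_cons, Matrix.head_cons] at k1 k2 k3
    funext j
    fin_cases j
    · simp
    · simp
      linear_combination k1
    · simp
      linear_combination k2
    · simp
      linear_combination k3
  push_neg at h0
  by_cases h1 : a 1 ≠ 0
  · refine ⟨![0, 1, -((a 2 / a 1) ^ 2), -((a 3 / a 1) ^ 2)], fun c hc => ⟨c 1, ?_⟩⟩
    have k0 := hev c hc ![1, 0, 0, 0] (by simp [h0])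
    have k2 := hev c hc ![0, -(a 2 / a 1), 1, 0] (by simp only [Matrix.cons_val]; field_simp; ring)
    have k3 := hev c hc ![0, -(a 3 / a 1), 0, 1] (by simp only [Matrix.cons_val]; field_simp; ring)
    norm_num [Matrix.cons_val_two, Matrix.cons_val_three, Matrix.tail_cons, Matrix.head_cons] at k0 k2 k3
    funext j
    fin_cases j
    · simpa using k0
    · simp
    · simp
      linear_combination k2
    · simp
      linear_combination k3
  push_neg at h1
  by_cases h2 : a 2 ≠ 0
  · refine ⟨![0, 0, 1, -((a 3 / a 2) ^ 2)], fun c hc => ⟨c 2, ?_⟩⟩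
    have k0 := hev c hc ![1, 0, 0, 0] (by simp [h0])
    have k1 := hev c hc ![0, 1, 0, 0] (by simp [h1])
    have k3 := hev c hc ![0, 0, -(a 3 / a 2), 1] (by simp only [Matrix.cons_val]; field_simp; ring)
    norm_num [Matrix.cons_val_two, Matrix.cons_val_three, Matrix.tail_cons, Matrix.head_cons] at k0 k1 k3
    funext j
    fin_cases j
    · simpa using k0
    · simpa using k1
    · simp
    · simp
      linear_combination k3
  push_neg at h2
  by_cases h3 : a 3 ≠ 0
  · refine ⟨![0, 0, 0, 1], fun c hc => ⟨c 3, ?_⟩⟩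
    have k0 := hev c hc ![1, 0, 0, 0] (by simp [h0])
    have k1 := hev c hc ![0, 1, 0, 0] (by simp [h1])
    have k2 := hev c hc ![0, 0, 1, 0] (by simp [h2])
    norm_num [Matrix.cons_val_two, Matrix.cons_val_three, Matrix.tail_cons, Matrix.head_cons] at k0 k1 k2
    funext j
    fin_cases j
    · simpa using k0
    · simpa using k1
    · simpa using k2
    · simp
  push_neg at h3
  refine ⟨0, fun c hc => ⟨0, ?_⟩⟩
  have k0 := hev c hc ![1, 0, 0, 0] (by simp [h0])
  have k1 := hev c hc ![0, 1, 0, 0] (by simp [h1])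
  have k2 := hev c hc ![0, 0, 1, 0] (by simp [h2])
  have k3 := hev c hc ![0, 0, 0, 1] (by simp [h3])
  norm_num [Matrix.cons_val_two, Matrix.cons_val_three, Matrix.tail_cons, Matrix.head_cons] at k0 k1 k2 k3
  funext j
  fin_cases j
  · simpa using k0
  · simpa using k1
  · simpa using k2
  · simpa using k3

end
end StrengthAux

open MvPolynomial in
/-- In `k[x,y,u,v,f,g,p,q]` with `deg x = deg y = deg u = deg v = 1` and
`deg f = deg g = deg p = deg q = 2`, there are no weighted-homogeneous polynomials
`x₁` of degree 1, `q₁` of degree 3 and `g₁, g₂, h₁, h₂` of degree 2 with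
`x²f + y²g + u²p + v²q = x₁q₁ + g₁h₁ + g₂h₂`. -/
theorem case_c (k : Type*) [Field k] :
    ¬ ∃ x1 q1 g1 g2 h1 h2 : MvPolynomial (Fin 8) k,
      x1.IsWeightedHomogeneous strengthWeight 1 ∧
      q1.IsWeightedHomogeneous strengthWeight 3 ∧
      g1.IsWeightedHomogeneous strengthWeight 2 ∧
      g2.IsWeightedHomogeneous strengthWeight 2 ∧
      h1.IsWeightedHomogeneous strengthWeight 2 ∧
      h2.IsWeightedHomogeneous strengthWeight 2 ∧
      (X 0 ^ 2 * X 4 + X 1 ^ 2 * X 5 + X 2 ^ 2 * X 6 + X 3 ^ 2 * X 7 :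
          MvPolynomial (Fin 8) k) = x1 * q1 + g1 * h1 + g2 * h2 := by
  rintro ⟨x1, q1, g1, g2, h1, h2, hx1, hq1, hg1, hg2, hh1, hh2, hE⟩
  classical
  -- structure of x1
  obtain ⟨a, ha⟩ := (Submodule.mem_span_range_iff_exists_fun k).mp (deg_one_structure x1 hx1)
  have ha' : x1 = C (a 0) * X 0 + C (a 1) * X 1 + C (a 2) * X 2 + C (a 3) * X 3 := by
    rw [← ha, Fin.sum_univ_four]; simp [smul_eq_C_mul]
  -- psi representations
  have hrepg1 := Polynomial.eq_X_add_C_of_degree_le_one (psi_degree_le g1 2 hg1 (by norm_num))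
  have hrepg2 := Polynomial.eq_X_add_C_of_degree_le_one (psi_degree_le g2 2 hg2 (by norm_num))
  have hreph1 := Polynomial.eq_X_add_C_of_degree_le_one (psi_degree_le h1 2 hh1 (by norm_num))
  have hreph2 := Polynomial.eq_X_add_C_of_degree_le_one (psi_degree_le h2 2 hh2 (by norm_num))
  have hrepq1 := Polynomial.eq_X_add_C_of_degree_le_one (psi_degree_le q1 3 hq1 (by norm_num))
  obtain ⟨lam1, hlam1⟩ := (Submodule.mem_span_range_iff_exists_fun k).mp (psi_coeff_one_mem g1 hg1)
  obtain ⟨lam2, hlam2⟩ := (Submodule.mem_span_range_iff_exists_fun k).mp (psi_coeff_one_mem g2 hg2)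
  obtain ⟨mu1, hmu1⟩ := (Submodule.mem_span_range_iff_exists_fun k).mp (psi_coeff_one_mem h1 hh1)
  obtain ⟨mu2, hmu2⟩ := (Submodule.mem_span_range_iff_exists_fun k).mp (psi_coeff_one_mem h2 hh2)
  rw [Fin.sum_univ_four] at hlam1 hlam2 hmu1 hmu2
  simp only [Matrix.cons_val_zero, Matrix.cons_val_one, Matrix.head_cons,
    Matrix.cons_val_two, Matrix.cons_val_three, Matrix.tail_cons] at hlam1 hlam2 hmu1 hmu2
  set g10 := (psi g1).coeff 0 with hg10
  set g11 := (psi g1).coeff 1 with hg11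
  set g20 := (psi g2).coeff 0 with hg20
  set g21 := (psi g2).coeff 1 with hg21
  set h10 := (psi h1).coeff 0 with hh10
  set h11 := (psi h1).coeff 1 with hh11
  set h20 := (psi h2).coeff 0 with hh20
  set h21 := (psi h2).coeff 1 with hh21
  set qA := (psi q1).coeff 0 with hqA
  set qB := (psi q1).coeff 1 with hqB
  -- apply psi to the main equation
  have hLpsi : psi (X 0 ^ 2 * X 4 + X 1 ^ 2 * X 5 + X 2 ^ 2 * X 6 + X 3 ^ 2 * X 7 :
      MvPolynomial (Fin 8) k) = Polynomial.C (X 0 ^ 2 * X 4 + X 1 ^ 2 * X 5 + X 2 ^ 2 * X 6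
        + X 3 ^ 2 * X 7 : MvPolynomial (Fin 8) k) * Polynomial.X := by
    rw [map_add, map_add, map_add, map_mul, map_mul, map_mul, map_mul,
      map_pow, map_pow, map_pow, map_pow, psi_X0, psi_X1, psi_X2, psi_X3,
      psi_X4, psi_X5, psi_X6, psi_X7, Polynomial.C_add, Polynomial.C_add, Polynomial.C_add,
      Polynomial.C_mul, Polynomial.C_mul, Polynomial.C_mul, Polynomial.C_mul,
      Polynomial.C_pow, Polynomial.C_pow, Polynomial.C_pow, Polynomial.C_pow]
    ring
  have hR : psi (x1 * q1 + g1 * h1 + g2 * h2)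
      = (Polynomial.C (x1 * qB) * Polynomial.X + Polynomial.C (x1 * qA))
      + (Polynomial.C (g11 * h11) * Polynomial.X ^ 2
          + Polynomial.C (g11 * h10 + g10 * h11) * Polynomial.X + Polynomial.C (g10 * h10))
      + (Polynomial.C (g21 * h21) * Polynomial.X ^ 2
          + Polynomial.C (g21 * h20 + g20 * h21) * Polynomial.X + Polynomial.C (g20 * h20)) := by
    rw [map_add, map_add, map_mul, map_mul, map_mul, deg_one_psi x1 hx1,
      hrepq1, hrepg1, hreph1, hrepg2, hreph2, prod_expand g11 g10 h11 h10,
      prod_expand g21 g20 h21 h20]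
    rw [show Polynomial.C x1 * (Polynomial.C qB * Polynomial.X + Polynomial.C qA)
        = Polynomial.C (x1 * qB) * Polynomial.X + Polynomial.C (x1 * qA) by
      rw [Polynomial.C_mul, Polynomial.C_mul]; ring]
  have hPsi : Polynomial.C (X 0 ^ 2 * X 4 + X 1 ^ 2 * X 5 + X 2 ^ 2 * X 6 + X 3 ^ 2 * X 7 :
      MvPolynomial (Fin 8) k) * Polynomial.X
      = (Polynomial.C (x1 * qB) * Polynomial.X + Polynomial.C (x1 * qA))
      + (Polynomial.C (g11 * h11) * Polynomial.X ^ 2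
          + Polynomial.C (g11 * h10 + g10 * h11) * Polynomial.X + Polynomial.C (g10 * h10))
      + (Polynomial.C (g21 * h21) * Polynomial.X ^ 2
          + Polynomial.C (g21 * h20 + g20 * h21) * Polynomial.X + Polynomial.C (g20 * h20)) := by
    rw [← hLpsi, hE, hR]
  -- extract coefficients 1 and 2
  have E1 : (X 0 ^ 2 * X 4 + X 1 ^ 2 * X 5 + X 2 ^ 2 * X 6 + X 3 ^ 2 * X 7 :
      MvPolynomial (Fin 8) k) = x1 * qB + (g11 * h10 + g10 * h11) + (g21 * h20 + g20 * h21) := by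
    have h := congrArg (fun p => p.coeff 1) hPsi
    simp only [Polynomial.coeff_add, Polynomial.coeff_C_mul, Polynomial.coeff_X_one,
      Polynomial.coeff_X_pow, Polynomial.coeff_C, mul_one, mul_zero, add_zero, zero_add,
      one_ne_zero, if_false, if_neg (by norm_num : ¬(1 : ℕ) = 2),
      if_neg (by norm_num : ¬(1 : ℕ) = 0)] at h
    exact h
  have E2 : (0 : MvPolynomial (Fin 8) k) = g11 * h11 + g21 * h21 := by
    have h := congrArg (fun p => p.coeff 2) hPsi
    simp only [Polynomial.coeff_add, Polynomial.coeff_C_mul, Polynomial.coeff_X,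
      Polynomial.coeff_X_pow, Polynomial.coeff_C, mul_one, mul_zero, add_zero, zero_add,
      if_pos rfl, if_neg (by norm_num : ¬(2 : ℕ) = 0), if_neg (by norm_num : ¬(2 : ℕ) = 1)] at h
    norm_num at h
    exact h
  -- the quadratic identity on the coefficient vectors
  have hquad : ∀ c : Fin 4 → k,
      sdot lam1 c * sdot mu1 c + sdot lam2 c * sdot mu2 c = 0 := by
    intro c
    have h := congrArg (theta c) E2
    rw [map_zero, map_add, map_mul, map_mul, ← hlam1, ← hlam2, ← hmu1, ← hmu2,
      theta_lin, theta_lin, theta_lin, theta_lin, ← C_mul, ← C_mul, ← C_add] at h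
    exact (C_injective (Fin 8) k (by rw [← h, C_0])).symm
  obtain ⟨w1, w2, ⟨a1, b1, hc1⟩, ⟨a2, b2, hc2⟩, ⟨a3, b3, hc3⟩, ⟨a4, b4, hc4⟩⟩ :=
    span_two lam1 mu1 lam2 mu2 hquad
  obtain ⟨K, hK2, hKorth⟩ := exists_ker_subspace w1 w2
  have horth : ∀ c ∈ K, sdot lam1 c = 0 ∧ sdot mu1 c = 0 ∧ sdot lam2 c = 0 ∧ sdot mu2 c = 0 := by
    intro c hc
    obtain ⟨hw1, hw2⟩ := hKorth c hc
    refine ⟨?_, ?_, ?_, ?_⟩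
    · rw [hc1, sdot_add_left, sdot_smul_left, sdot_smul_left, hw1, hw2]; ring
    · rw [hc2, sdot_add_left, sdot_smul_left, sdot_smul_left, hw1, hw2]; ring
    · rw [hc3, sdot_add_left, sdot_smul_left, sdot_smul_left, hw1, hw2]; ring
    · rw [hc4, sdot_add_left, sdot_smul_left, sdot_smul_left, hw1, hw2]; ring
  -- the key relation for c in K
  have hcrel : ∀ c ∈ K, (X 0 : MvPolynomial (Fin 8) k) ^ 2 * C (c 0) + X 1 ^ 2 * C (c 1)
      + X 2 ^ 2 * C (c 2) + X 3 ^ 2 * C (c 3) = x1 * theta c qB := by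
    intro c hc
    obtain ⟨hl1, hm1, hl2, hm2⟩ := horth c hc
    have t1 : theta c g11 = 0 := by rw [← hlam1, theta_lin, hl1, C_0]
    have t2 : theta c h11 = 0 := by rw [← hmu1, theta_lin, hm1, C_0]
    have t3 : theta c g21 = 0 := by rw [← hlam2, theta_lin, hl2, C_0]
    have t4 : theta c h21 = 0 := by rw [← hmu2, theta_lin, hm2, C_0]
    have hx1fix : theta c x1 = x1 := by
      rw [ha', map_add, map_add, map_add, map_mul, map_mul, map_mul, map_mul,
        theta_X0, theta_X1, theta_X2, theta_X3, theta_C, theta_C, theta_C, theta_C]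
    have h := congrArg (theta c) E1
    simp only [map_add, map_mul, map_pow, theta_X0, theta_X1, theta_X2, theta_X3,
      theta_X4, theta_X5, theta_X6, theta_X7, t1, t2, t3, t4, hx1fix,
      zero_mul, mul_zero, add_zero, zero_add] at h
    exact h
  -- final contradiction: all c in K are multiples of a single vector
  have hrel : ∀ c ∈ K, ∃ m : MvPolynomial (Fin 8) k,
      (X 0 : MvPolynomial (Fin 8) k) ^ 2 * C (c 0) + X 1 ^ 2 * C (c 1)
        + X 2 ^ 2 * C (c 2) + X 3 ^ 2 * C (c 3)
      = (C (a 0) * X 0 + C (a 1) * X 1 + C (a 2) * X 2 + C (a 3) * X 3) * m := by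
    intro c hc
    exact ⟨theta c qB, by rw [← ha']; exact hcrel c hc⟩
  obtain ⟨e, he⟩ := final_step a K hrel
  have := finrank_le_one_of K e he
  omega
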